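/- Let K be a real symmetric positive semidefinite 2×2 matrix and a₀, b₀ real numbers with |a₀| < 2, |b₀| < 2, and a₀ ≥ b₀. If K(1 - i(a₀/2)Ω)K ≤ 1 - i(b₀/2)Ω in the Loewner order on complex Hermitian matrices, then Tr(K) ≤ 2√((2+b₀)/(2+a₀)), with equality for K = √((2+b₀)/(2+a₀))·1. -/

import Mathlib

open Matrix
open scoped ComplexOrder

noncomputable def Ωc : Matrix (Fin 2) (Fin 2) ℂ := !![0, 1; -1, 0]

theorem trace_max_quadratic_constraint (a₀ b₀ : ℝ) (ha : |a₀| < 2) (hb : |b₀| < 2)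
    (hab : a₀ ≥ b₀) (K : Matrix (Fin 2) (Fin 2) ℝ) (hKs : Kᵀ = K) (hK : K.PosSemidef)
    (hle : (((1 : Matrix (Fin 2) (Fin 2) ℂ) - (Complex.I * ((b₀ : ℂ)/2)) • Ωc)
        - (K.map Complex.ofReal) *
          ((1 : Matrix (Fin 2) (Fin 2) ℂ) - (Complex.I * ((a₀ : ℂ)/2)) • Ωc) *
          (K.map Complex.ofReal)).PosSemidef) :
    K.trace ≤ 2 * Real.sqrt ((2 + b₀)/(2 + a₀)) ∧
    (((1 : Matrix (Fin 2) (Fin 2) ℂ) - (Complex.I * ((b₀ : ℂ)/2)) • Ωc)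
        - ((Real.sqrt ((2 + b₀)/(2 + a₀)) • (1 : Matrix (Fin 2) (Fin 2) ℝ)).map Complex.ofReal) *
          ((1 : Matrix (Fin 2) (Fin 2) ℂ) - (Complex.I * ((a₀ : ℂ)/2)) • Ωc) *
          ((Real.sqrt ((2 + b₀)/(2 + a₀)) • (1 : Matrix (Fin 2) (Fin 2) ℝ)).map Complex.ofReal)).PosSemidef ∧
    (Real.sqrt ((2 + b₀)/(2 + a₀)) • (1 : Matrix (Fin 2) (Fin 2) ℝ)).trace
      = 2 * Real.sqrt ((2 + b₀)/(2 + a₀)) := by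
  obtain ⟨ha1, ha2⟩ := abs_lt.mp ha
  obtain ⟨hb1, hb2⟩ := abs_lt.mp hb
  have hA : (0:ℝ) < 2 + a₀ := by linarith
  have hB : (0:ℝ) < 2 + b₀ := by linarith
  have hc2 : (0:ℝ) ≤ (2 + b₀)/(2 + a₀) := by positivity
  set c : ℝ := Real.sqrt ((2 + b₀)/(2 + a₀)) with hc
  have hcsq : c ^ 2 = (2 + b₀)/(2 + a₀) := Real.sq_sqrt hc2
  have hq : K 1 0 = K 0 1 := by
    conv_lhs => rw [← hKs]
    rfl
  -- diagonal entries nonneg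
  have hp0 : 0 ≤ K 0 0 := by
    have := hK.dotProduct_mulVec_nonneg ![1, 0]
    simpa [Matrix.mulVec, dotProduct, Fin.sum_univ_two] using this
  have hr0 : 0 ≤ K 1 1 := by
    have := hK.dotProduct_mulVec_nonneg ![0, 1]
    simpa [Matrix.mulVec, dotProduct, Fin.sum_univ_two] using this
  -- main constraint from test vector (1, I)
  have h := hle.dotProduct_mulVec_nonneg ![1, Complex.I]
  rw [Complex.le_def] at h
  obtain ⟨h, -⟩ := h
  simp [Matrix.mulVec, dotProduct, Fin.sum_univ_two, Matrix.mul_apply,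
    Matrix.sub_apply, Matrix.smul_apply, Matrix.one_apply, Ωc, Matrix.map_apply,
    Matrix.cons_val_zero, Matrix.cons_val_one, Complex.add_re, Complex.sub_re,
    Complex.mul_re, Complex.mul_im, Complex.I_re, Complex.I_im, Complex.ofReal_re,
    Complex.ofReal_im, Complex.add_im, Complex.sub_im, hq] at h
  refine ⟨?_, ?_, ?_⟩
  · -- trace bound
    rw [Matrix.trace_fin_two]
    have hmul : (K 0 0 + K 1 1) ^ 2 * (2 + a₀) ≤ 4 * (2 + b₀) := by
      nlinarith [sq_nonneg (K 0 0 - K 1 1), sq_nonneg (K 0 1),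
        mul_nonneg (sub_nonneg.mpr ha2.le) (sq_nonneg (K 0 0 - K 1 1)),
        mul_nonneg (sub_nonneg.mpr ha2.le) (sq_nonneg (K 0 1))]
    have ht2 : (K 0 0 + K 1 1) ^ 2 ≤ (2 * c) ^ 2 := by
      have h4 : (2 * c) ^ 2 = 4 * ((2 + b₀)/(2 + a₀)) := by rw [mul_pow, hcsq]; ring
      rw [h4, ← sub_nonneg]
      have : 4 * ((2 + b₀)/(2 + a₀)) - (K 0 0 + K 1 1) ^ 2
          = (4 * (2 + b₀) - (K 0 0 + K 1 1) ^ 2 * (2 + a₀)) / (2 + a₀) := by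
        field_simp
      rw [this]
      apply div_nonneg _ hA.le
      linarith
    have h2c : 0 ≤ 2 * c := by positivity
    nlinarith [sq_nonneg (K 0 0 + K 1 1 - 2 * c), sq_nonneg (K 0 0 + K 1 1 + 2 * c)]
  · -- equality case: matrix is PSD
    set d : ℝ := (a₀ - b₀)/(2 + a₀) with hd
    have hd0 : 0 ≤ d := div_nonneg (by linarith) hA.le
    have hmap : ((c • (1 : Matrix (Fin 2) (Fin 2) ℝ)).map Complex.ofReal)
        = (c : ℂ) • (1 : Matrix (Fin 2) (Fin 2) ℂ) := by
      ext i j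
      fin_cases i <;> fin_cases j <;>
        simp [Matrix.map_apply, Matrix.one_apply]
    rw [hmap]
    have hAne : ((2 : ℂ) + (a₀:ℂ)) ≠ 0 := by
      intro hcon
      have : ((2 + a₀ : ℝ) : ℂ) = 0 := by push_cast; linear_combination hcon
      exact hA.ne' (Complex.ofReal_eq_zero.mp this)
    have hcc : ((c : ℂ))^2 * (2 + (a₀:ℂ)) = 2 + (b₀:ℂ) := by
      rw [← eq_div_iff hAne, ← Complex.ofReal_pow, hcsq]
      push_cast
      ring
    have hE : ((1 : Matrix (Fin 2) (Fin 2) ℂ) - (Complex.I * ((b₀ : ℂ)/2)) • Ωc)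
        - ((c : ℂ) • (1 : Matrix (Fin 2) (Fin 2) ℂ)) *
          ((1 : Matrix (Fin 2) (Fin 2) ℂ) - (Complex.I * ((a₀ : ℂ)/2)) • Ωc) *
          ((c : ℂ) • (1 : Matrix (Fin 2) (Fin 2) ℂ))
        = (d : ℂ) • !![1, Complex.I; -Complex.I, 1] := by
      ext i j
      fin_cases i <;> fin_cases j <;>
        · simp [Matrix.mul_apply, Fin.sum_univ_two, Matrix.sub_apply, Matrix.smul_apply,
            Matrix.one_apply, Ωc, hd]
          try field_simp
          first
          | linear_combination -hcc
          | linear_combination 2 * Complex.I * (a₀:ℂ) * hcc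
          | linear_combination (-(Complex.I * (a₀:ℂ))) * hcc
          | linear_combination (1 + Complex.I) * (a₀:ℂ) * hcc
          | linear_combination (Complex.I - 1) * (a₀:ℂ) * hcc
          | linear_combination (a₀:ℂ) * hcc
          | linear_combination (-(a₀:ℂ)) * hcc
    rw [hE]
    refine Matrix.PosSemidef.of_dotProduct_mulVec_nonneg ?_ ?_
    · unfold Matrix.IsHermitian
      ext i j
      fin_cases i <;> fin_cases j <;>
        simp [Matrix.conjTranspose_apply, Matrix.smul_apply, Complex.conj_ofReal]
    · intro x
      have key : dotProduct (star x) (((d : ℂ) • !![1, Complex.I; -Complex.I, 1]) *ᵥ x)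
          = (d : ℂ) * ((Complex.normSq (x 0 + Complex.I * x 1) : ℝ) : ℂ) := by
        have hz := Complex.mul_conj (x 0 + Complex.I * x 1)
        simp [Matrix.mulVec, dotProduct, Fin.sum_univ_two, Matrix.smul_apply]
        rw [← hz]
        simp only [map_add, _root_.map_mul, Complex.conj_I, Complex.I_sq]
        ring_nf
        simp [Complex.I_sq]
      rw [key, ← Complex.ofReal_mul, Complex.zero_le_real]
      exact mul_nonneg hd0 (Complex.normSq_nonneg _)
  · rw [Matrix.trace_smul, Matrix.trace_one]
    simp
    ring
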